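/- If a₀₃ = (-7 - 4a₀₂)/2, then the quartic polynomial kernel S_4 has approximation order 2: Σ_{i∈ℤ} S_4(t - i) = 1 and Σ_{i∈ℤ} (t - i)S_4(t - i) = 0 for all real t, for every value of the free parameter a₀₂. -/
import Mathlib


noncomputable def S4 (a2 a3 t : ℝ) : ℝ :=
  if |t| < 1 then
    (1 - |t|) * (1 + |t| + (1 + a2) * |t| ^ 2 + (1 + a2 + a3) * |t| ^ 3)
  else if |t| < 2 then
    (1 - |t|) * (2 - |t|) ^ 2 * (5 + 3 * a2 + 2 * a3 - (1 + a2 + a3) * |t|)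
  else 0

lemma S4_zero (a2 a3 t : ℝ) (h : 2 ≤ |t|) : S4 a2 a3 t = 0 := by
  unfold S4
  rw [if_neg (by linarith), if_neg (by linarith)]

lemma S4_vals (a2 a3 s : ℝ) (hs : 0 < s) (hs1 : s < 1) :
    S4 a2 a3 (s + 1) = (1 - (s+1)) * (2 - (s+1)) ^ 2 * (5 + 3*a2 + 2*a3 - (1+a2+a3)*(s+1)) ∧
    S4 a2 a3 s = (1 - s) * (1 + s + (1+a2)*s^2 + (1+a2+a3)*s^3) ∧
    S4 a2 a3 (s - 1) = (1 - (1-s)) * (1 + (1-s) + (1+a2)*(1-s)^2 + (1+a2+a3)*(1-s)^3) ∧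
    S4 a2 a3 (s - 2) = (1 - (2-s)) * (2 - (2-s)) ^ 2 * (5 + 3*a2 + 2*a3 - (1+a2+a3)*(2-s)) := by
  refine ⟨?_, ?_, ?_, ?_⟩ <;> unfold S4
  · rw [abs_of_nonneg (by linarith), if_neg (by linarith), if_pos (by linarith)]
  · rw [abs_of_nonneg hs.le, if_pos (by linarith)]
  · rw [abs_of_nonpos (by linarith), show -(s-1) = 1 - s by ring, if_pos (by linarith)]
  · rw [abs_of_nonpos (by linarith), show -(s-2) = 2 - s by ring,
      if_neg (by linarith), if_pos (by linarith)]

lemma core1 (a2 a3 s : ℝ) (ha3 : a3 = (-7 - 4 * a2) / 2) (hs : 0 ≤ s) (hs1 : s < 1) :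
    S4 a2 a3 (s + 1) + S4 a2 a3 s + S4 a2 a3 (s - 1) + S4 a2 a3 (s - 2) = 1 := by
  rcases eq_or_lt_of_le hs with h0 | h0
  · subst ha3
    norm_num [← h0, S4, abs_of_nonneg, abs_of_nonpos]
  · obtain ⟨e1, e2, e3, e4⟩ := S4_vals a2 a3 s h0 hs1
    rw [e1, e2, e3, e4, ha3]; ring

lemma core2 (a2 a3 s : ℝ) (ha3 : a3 = (-7 - 4 * a2) / 2) (hs : 0 ≤ s) (hs1 : s < 1) :
    (s + 1) * S4 a2 a3 (s + 1) + s * S4 a2 a3 s + (s - 1) * S4 a2 a3 (s - 1)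
      + (s - 2) * S4 a2 a3 (s - 2) = 0 := by
  rcases eq_or_lt_of_le hs with h0 | h0
  · subst ha3
    norm_num [← h0, S4, abs_of_nonneg, abs_of_nonpos]
  · obtain ⟨e1, e2, e3, e4⟩ := S4_vals a2 a3 s h0 hs1
    rw [e1, e2, e3, e4, ha3]; ring

lemma support_lemma (a2 a3 t : ℝ) (f : ℝ → ℝ) (hf0 : f 0 = 0) :
    ∀ i : ℤ, i ∉ ({⌊t⌋ - 1, ⌊t⌋, ⌊t⌋ + 1, ⌊t⌋ + 2} : Finset ℤ) →
      f (S4 a2 a3 (t - i)) = 0 := by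
  intro i hi
  simp only [Finset.mem_insert, Finset.mem_singleton] at hi
  push_neg at hi
  have h1 : (⌊t⌋ : ℝ) ≤ t := Int.floor_le t
  have h2 : t < ⌊t⌋ + 1 := Int.lt_floor_add_one t
  have : i ≤ ⌊t⌋ - 2 ∨ ⌊t⌋ + 3 ≤ i := by omega
  have habs : 2 ≤ |t - i| := by
    rcases this with h | h
    · have : (i : ℝ) ≤ (⌊t⌋ : ℝ) - 2 := by exact_mod_cast (by exact_mod_cast h : (i:ℤ) ≤ ⌊t⌋ - 2)
      rw [le_abs]; left; push_cast at this ⊢; linarith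
    · have : (⌊t⌋ : ℝ) + 3 ≤ (i : ℝ) := by exact_mod_cast h
      rw [le_abs]; right; linarith
  rw [S4_zero a2 a3 _ habs, hf0]

theorem S4_approx_order_two (a2 a3 : ℝ) (ha3 : a3 = (-7 - 4 * a2) / 2) :
    (∀ t : ℝ, ∑' i : ℤ, S4 a2 a3 (t - i) = 1) ∧
    (∀ t : ℝ, ∑' i : ℤ, (t - i) * S4 a2 a3 (t - i) = 0) := by
  constructor <;> intro t <;>
  · set n := ⌊t⌋ with hn
    have hs0 : (0:ℝ) ≤ t - n := by
      have := Int.floor_le t; linarith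
    have hs1 : t - n < 1 := by
      have := Int.lt_floor_add_one t; push_cast at this ⊢; linarith
    have hset : ((n - 1 : ℤ)) ∉ ({n, n + 1, n + 2} : Finset ℤ) := by
      simp only [Finset.mem_insert, Finset.mem_singleton]; omega
    have hset2 : ((n : ℤ)) ∉ ({n + 1, n + 2} : Finset ℤ) := by
      simp only [Finset.mem_insert, Finset.mem_singleton]; omega
    have hset3 : ((n + 1 : ℤ)) ∉ ({n + 2} : Finset ℤ) := by
      simp only [Finset.mem_singleton]; omega
    first
    | rw [tsum_eq_sum (s := ({n - 1, n, n + 1, n + 2} : Finset ℤ))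
        (support_lemma a2 a3 t id rfl),
        Finset.sum_insert hset, Finset.sum_insert hset2, Finset.sum_insert hset3,
        Finset.sum_singleton]
    | rw [tsum_eq_sum (s := ({n - 1, n, n + 1, n + 2} : Finset ℤ))
        (fun i hi => by
          have := support_lemma a2 a3 t (fun x => x) rfl i hi
          simp [this]),
        Finset.sum_insert hset, Finset.sum_insert hset2, Finset.sum_insert hset3,
        Finset.sum_singleton]
    push_cast
    first
    | (rw [show t - ((n:ℝ) - 1) = (t - n) + 1 by ring, show t - ((n:ℝ) + 1) = (t - n) - 1 by ring,
        show t - ((n:ℝ) + 2) = (t - n) - 2 by ring]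
       linarith [core1 a2 a3 (t - n) ha3 hs0 hs1])
    | (rw [show t - ((n:ℝ) - 1) = (t - n) + 1 by ring, show t - ((n:ℝ) + 1) = (t - n) - 1 by ring,
        show t - ((n:ℝ) + 2) = (t - n) - 2 by ring]
       linarith [core2 a2 a3 (t - n) ha3 hs0 hs1])
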